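/- Let p ∈ (1,∞), q = p/(p−1), A ∈ ℂ^{d×d}, b, c ∈ ℂ^d and V ≥ 0 a real number. Suppose Γ_p^{(A,b,c,V)}(ξ) ≥ 0 for all ξ ∈ ℂ^d. Then for all α, β ∈ ℝ^d: (4/(pq))⟨(Re A)α, α⟩ + ⟨(Re A)β, β⟩ + 2⟨((1/p)(Im A) − (1/q)(Im A)ᵀ)α, β⟩ + ⟨Im(b+c), β⟩ + 2⟨Re((1/p)b + (1/q)c), α⟩ + V ≥ 0, where Re A and Im A are the entrywise real and imaginary parts of A (real d×d matrices), (Im A)ᵀ is the transpose, and ⟨·,·⟩ on the left-hand side is the Euclidean inner product on ℝ^d. -/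

import Mathlib

open scoped ComplexConjugate

/-- The ℝ-linear operator `𝒥_p ξ = (p/2)(ξ + (1 − 2/p)·conj ξ)` on `ℂ^d`. -/
noncomputable def Jmap (p : ℝ) {d : ℕ} (ξ : EuclideanSpace ℂ (Fin d)) :
    EuclideanSpace ℂ (Fin d) :=
  WithLp.toLp 2 (fun i => (p / 2 : ℂ) * (ξ i + ((1 - 2 / p : ℝ) : ℂ) * conj (ξ i)))

/-- The Hermitian inner product `⟨x,y⟩ = ∑ x i * conj (y i)`, linear in the first variable. -/
noncomputable def hip {d : ℕ} (x y : EuclideanSpace ℂ (Fin d)) : ℂ :=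
  @inner ℂ _ _ y x

/-- A matrix acting on `ℂ^d`. -/
noncomputable def mulVecE {d : ℕ} (A : Matrix (Fin d) (Fin d) ℂ)
    (ξ : EuclideanSpace ℂ (Fin d)) : EuclideanSpace ℂ (Fin d) :=
  WithLp.toLp 2 (fun i => A.mulVec (fun j => ξ j) i)

/-- `Γ_p^{(A,b,c,V)}(ξ) = Re⟨Aξ, 𝒥_p ξ⟩ + Re⟨b + 𝒥_p c, ξ⟩ + V`. -/
noncomputable def Gamma (p : ℝ) {d : ℕ} (A : Matrix (Fin d) (Fin d) ℂ)
    (b c : EuclideanSpace ℂ (Fin d)) (V : ℝ) (ξ : EuclideanSpace ℂ (Fin d)) : ℝ :=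
  (hip (mulVecE A ξ) (Jmap p ξ)).re + (hip (b + Jmap p c) ξ).re + V

lemma Jmap_apply (p : ℝ) (hp : p ≠ 0) {d : ℕ} (ξ : EuclideanSpace ℂ (Fin d)) (i : Fin d) :
    Jmap p ξ i = (((p - 1) * (ξ i).re : ℝ) : ℂ) + ((ξ i).im : ℝ) * Complex.I := by
  unfold Jmap
  apply Complex.ext <;>
    simp [Complex.mul_re, Complex.mul_im, Complex.add_re, Complex.add_im,
      Complex.div_re, Complex.div_im, Complex.normSq] <;>
    field_simp <;> ring

theorem stmt13 (d : ℕ) (hd : 1 ≤ d) (p q : ℝ) (hp : 1 < p) (hq : q = p / (p - 1))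
    (A : Matrix (Fin d) (Fin d) ℂ) (b c : EuclideanSpace ℂ (Fin d))
    (V : ℝ) (hV : 0 ≤ V)
    (hΓ : ∀ ξ : EuclideanSpace ℂ (Fin d), 0 ≤ Gamma p A b c V ξ) :
    ∀ α β : Fin d → ℝ,
      0 ≤ (4 / (p * q)) * dotProduct ((A.map Complex.re).mulVec α) α
          + dotProduct ((A.map Complex.re).mulVec β) β
          + 2 * dotProduct
              (((1 / p) • (A.map Complex.im) - (1 / q) • (A.map Complex.im).transpose).mulVec α) β
          + dotProduct (fun i => (b i + c i).im) β
          + 2 * dotProduct (fun i => ((1 / p : ℂ) * b i + (1 / q : ℂ) * c i).re) α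
          + V := by
  intro α β
  have hp0 : p ≠ 0 := by intro h; rw [h] at hp; norm_num at hp
  have hp1 : p - 1 ≠ 0 := sub_ne_zero_of_ne hp.ne'
  subst hq
  set x : Fin d → ℝ := fun i => 2 / p * α i with hxdef
  set ξ : EuclideanSpace ℂ (Fin d) :=
    WithLp.toLp 2 (fun i => ((x i : ℝ) : ℂ) + ((β i : ℝ) : ℂ) * Complex.I) with hξ
  -- expand the quadratic part of Gamma
  have e1 : (hip (mulVecE A ξ) (Jmap p ξ)).re
      = ((∑ i, ∑ j, (A i j).re * ((p - 1) * x i * x j))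
          + ∑ i, ∑ j, (A i j).re * (β i * β j))
          - (∑ i, ∑ j, (A i j).im * ((p - 1) * x i * β j))
          + ∑ i, ∑ j, (A i j).im * (x j * β i) := by
    have : (hip (mulVecE A ξ) (Jmap p ξ)).re
        = ∑ i, ∑ j, ((A i j).re * ((p - 1) * x i * x j) + (A i j).re * (β i * β j)
            - (A i j).im * ((p - 1) * x i * β j) + (A i j).im * (x j * β i)) := by
      simp only [hip, mulVecE, PiLp.inner_apply, RCLike.inner_apply, Matrix.mulVec,
        dotProduct, Complex.re_sum]
      refine Finset.sum_congr rfl fun i _ => ?_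
      rw [Finset.sum_mul, Complex.re_sum]
      refine Finset.sum_congr rfl fun j _ => ?_
      rw [Jmap_apply p hp0]
      simp [hξ, Complex.mul_re, Complex.mul_im, Complex.add_re, Complex.add_im]
      ring
    rw [this]
    simp only [Finset.sum_add_distrib, Finset.sum_sub_distrib]
  -- swap the transposed double sum
  have swap : (∑ i, ∑ j, (A i j).im * ((p - 1) * x i * β j))
      = ∑ i, ∑ j, (A j i).im * ((p - 1) * x j * β i) := Finset.sum_comm
  -- expand the linear part of Gamma
  have e2 : (hip (b + Jmap p c) ξ).re
      = (∑ i, ((b i).re + (p - 1) * (c i).re) * x i)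
        + ∑ i, ((b i).im + (c i).im) * β i := by
    have : (hip (b + Jmap p c) ξ).re
        = ∑ i, (((b i).re + (p - 1) * (c i).re) * x i + ((b i).im + (c i).im) * β i) := by
      simp only [hip, PiLp.inner_apply, RCLike.inner_apply, Complex.re_sum]
      refine Finset.sum_congr rfl fun i _ => ?_
      have hbc : (b + Jmap p c) i = b i + Jmap p c i := rfl
      rw [hbc, Jmap_apply p hp0]
      simp [hξ, Complex.mul_re, Complex.mul_im, Complex.add_re, Complex.add_im]
    rw [this, Finset.sum_add_distrib]
  -- expand the target dot products
  have hQ1 : (4 / (p * (p / (p - 1)))) * dotProduct ((A.map Complex.re).mulVec α) α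
      = ∑ i, ∑ j, (A i j).re * ((p - 1) * x i * x j) := by
    simp only [dotProduct, Matrix.mulVec, Matrix.map_apply]
    rw [Finset.mul_sum]
    refine Finset.sum_congr rfl fun i _ => ?_
    rw [Finset.sum_mul, Finset.mul_sum]
    refine Finset.sum_congr rfl fun j _ => ?_
    simp only [hxdef]
    field_simp
    ring
  have hQ2 : dotProduct ((A.map Complex.re).mulVec β) β
      = ∑ i, ∑ j, (A i j).re * (β i * β j) := by
    simp only [dotProduct, Matrix.mulVec, Matrix.map_apply]
    refine Finset.sum_congr rfl fun i _ => ?_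
    rw [Finset.sum_mul]
    refine Finset.sum_congr rfl fun j _ => ?_
    ring
  have hQ3 : 2 * dotProduct
        (((1 / p) • (A.map Complex.im)
          - (1 / (p / (p - 1))) • (A.map Complex.im).transpose).mulVec α) β
      = (∑ i, ∑ j, (A i j).im * (x j * β i))
        - ∑ i, ∑ j, (A j i).im * ((p - 1) * x j * β i) := by
    simp only [dotProduct, Matrix.mulVec, Matrix.map_apply, Matrix.sub_apply,
      Matrix.smul_apply, Matrix.transpose_apply, smul_eq_mul]
    rw [Finset.mul_sum, ← Finset.sum_sub_distrib]
    refine Finset.sum_congr rfl fun i _ => ?_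
    rw [Finset.sum_mul, Finset.mul_sum, ← Finset.sum_sub_distrib]
    refine Finset.sum_congr rfl fun j _ => ?_
    simp only [hxdef]
    field_simp
  have hL1 : dotProduct (fun i => (b i + c i).im) β
      = ∑ i, ((b i).im + (c i).im) * β i := by
    simp only [dotProduct, Complex.add_im]
  have hL2 : 2 * dotProduct
        (fun i => ((1 / p : ℂ) * b i + (1 / ((p / (p - 1) : ℝ) : ℂ)) * c i).re) α
      = ∑ i, ((b i).re + (p - 1) * (c i).re) * x i := by
    simp only [dotProduct]
    rw [Finset.mul_sum]
    refine Finset.sum_congr rfl fun i _ => ?_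
    simp only [hxdef, Complex.add_re, Complex.mul_re, one_div, Complex.inv_re, Complex.inv_im,
      Complex.ofReal_re, Complex.ofReal_im, Complex.normSq_ofReal, Complex.ofReal_div,
      Complex.ofReal_sub, Complex.ofReal_one, Complex.div_re, Complex.div_im,
      Complex.normSq_apply, Complex.add_im, Complex.sub_re, Complex.sub_im,
      Complex.one_re, Complex.one_im, Complex.neg_re, Complex.neg_im]
    field_simp
    ring
  have key := hΓ ξ
  rw [Gamma, e1, e2, swap] at key
  rw [hQ1, hQ2, hQ3, hL1, hL2]
  linarith [key]
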